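/- Let T > 0, m ≥ 1, k ≥ 0 be integers, and let u : [0,T)×ℝ → ℝ^m be such that u(t,·) is k-times continuously differentiable in x for each t, ∂ₜu exists on (0,T)×ℝ, and ∂ₜu(t,x) + w(t,x) = g(t,x) for all (t,x) ∈ (0,T)×ℝ, where w, g : (0,T)×ℝ → ℝ^m. Suppose there exist t₀ ∈ (0,T), real numbers a < b, and an index i ∈ {1,…,m} such that the i-th component g^i(t₀,·) is continuously differentiable on [a,b], and: (C0) there is a conserved density h for u; (C3) u(t₀,x) = 0 for all x ∈ [a,b]; (C4) ∂ₜu(t₀,a) = ∂ₜu(t₀,b), and moreover w(t₀,a) = w(t₀,b) (which holds automatically when w = A([u])u is given by differential operators acting on u, by (C3)); (C5) ∂ₓg^i(t₀,·) is either nonnegative on all of (a,b) or nonpositive on all of (a,b); (C6) if ∂ₓg^i(t₀,x) = 0 for all x ∈ (a,b), then u(t₀,x) = 0 for all x ∈ ℝ. Then u(t,x) = 0 for all (t,x) ∈ [0,T)×ℝ. -/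

import Mathlib

open MeasureTheory Set

/-- A continuous nonnegative function on an open interval with zero integral
vanishes on that interval. -/
lemma aux_zero_on_Ioo {a b : ℝ} (hab : a < b) {f : ℝ → ℝ}
    (hf : ContinuousOn f (Set.Icc a b)) (hnn : ∀ x ∈ Set.Ioo a b, 0 ≤ f x)
    (hz : ∫ x in Set.Ioo a b, f x = 0) : ∀ x ∈ Set.Ioo a b, f x = 0 := by
  have hint : IntegrableOn f (Set.Ioo a b) :=
    (hf.integrableOn_Icc).mono_set Set.Ioo_subset_Icc_self
  have hae : 0 ≤ᵐ[volume.restrict (Set.Ioo a b)] f :=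
    (ae_restrict_mem measurableSet_Ioo).mono hnn
  have hfz : f =ᵐ[volume.restrict (Set.Ioo a b)] 0 :=
    (setIntegral_eq_zero_iff_of_nonneg_ae hae hint).mp hz
  have := Measure.eqOn_Ioo_of_ae_eq (μ := volume) (a := a) (b := b) hfz
    (hf.mono Set.Ioo_subset_Icc_self) continuousOn_const
  exact fun x hx => this hx

/-- A continuous nonnegative integrable function on ℝ with zero integral vanishes. -/
lemma aux_zero_on_univ {f : ℝ → ℝ} (hf : Continuous f) (hnn : ∀ x, 0 ≤ f x)
    (hi : Integrable f) (hz : ∫ x, f x = 0) : ∀ x, f x = 0 := by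
  have hfz : f =ᵐ[volume] 0 := (integral_eq_zero_iff_of_nonneg hnn hi).mp hz
  have := ((Continuous.ae_eq_iff_eq volume hf continuous_const).mp hfz)
  exact fun x => congrFun this x

lemma iteratedDeriv_zero_fun {n : ℕ} {F : Type*} [NormedAddCommGroup F] [NormedSpace ℝ F] :
    iteratedDeriv n (fun _ : ℝ => (0 : F)) = fun _ => 0 := by
  induction n with
  | zero => simp [iteratedDeriv_zero]
  | succ n ih => rw [iteratedDeriv_succ, ih]; simp [deriv_const]

/-- **Theorem 2.2 (conserved quantity approach via the fundamental theorem of calculus).**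
An evolution system `∂ₜu + w = g` admitting a conserved density (C0), with `u`
vanishing on a space slice (C3), matching time-derivative and transport data at the
endpoints (C4), a signed derivative of a component of `g` (C5) and the
unique-continuation condition (C6), has `u ≡ 0`. -/
theorem conserved_quantity_unique_continuation_FTC
    (T : ℝ) (hT : 0 < T) (m k : ℕ) (hm : 1 ≤ m)
    (u w g : ℝ → ℝ → (Fin m → ℝ))
    (hreg : ∀ t ∈ Set.Ico (0:ℝ) T, ContDiff ℝ (k : ℕ∞) (u t))
    (hut : ∀ t ∈ Set.Ioo (0:ℝ) T, ∀ x : ℝ, DifferentiableAt ℝ (fun s => u s x) t)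
    (heq : ∀ t ∈ Set.Ioo (0:ℝ) T, ∀ x : ℝ,
      deriv (fun s => u s x) t + w t x = g t x)
    -- (C0): conserved density h
    (h : (Fin (k+1) → (Fin m → ℝ)) → ℝ)
    (h_cont : Continuous h)
    (h_sign : (∀ y, 0 ≤ h y) ∨ (∀ y, h y ≤ 0))
    (h_zero : ∀ y, h y = 0 ↔ y = 0)
    (h_int : ∀ t ∈ Set.Ico (0:ℝ) T,
      Integrable (fun x : ℝ => h (fun i => iteratedDeriv i.1 (u t) x)))
    (h_cons : ∃ c : ℝ, ∀ t ∈ Set.Ico (0:ℝ) T,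
      (∫ x : ℝ, h (fun i => iteratedDeriv i.1 (u t) x)) = c)
    -- data: t₀, a < b, component i, and gᵢ' = ∂ₓ gⁱ(t₀,·), C¹ on [a,b]
    (t₀ : ℝ) (ht₀ : t₀ ∈ Set.Ioo (0:ℝ) T) (a b : ℝ) (hab : a < b) (i : Fin m)
    (g' : ℝ → ℝ)
    (hg' : ∀ x ∈ Set.Icc a b, HasDerivAt (fun y => g t₀ y i) (g' x) x)
    (hg'cont : ContinuousOn g' (Set.Icc a b))
    -- (C3)
    (hC3 : ∀ x ∈ Set.Icc a b, u t₀ x = 0)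
    -- (C4)
    (hC4ut : deriv (fun s => u s a) t₀ = deriv (fun s => u s b) t₀)
    (hC4w : w t₀ a = w t₀ b)
    -- (C5)
    (hC5 : (∀ x ∈ Set.Ioo a b, 0 ≤ g' x) ∨ (∀ x ∈ Set.Ioo a b, g' x ≤ 0))
    -- (C6)
    (hC6 : (∀ x ∈ Set.Ioo a b, g' x = 0) → ∀ x : ℝ, u t₀ x = 0) :
    ∀ t ∈ Set.Ico (0:ℝ) T, ∀ x : ℝ, u t x = 0 := by
  -- Step 1: g t₀ a = g t₀ b
  have hga := heq t₀ ht₀ a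
  have hgb := heq t₀ ht₀ b
  have hgab : g t₀ a = g t₀ b := by rw [← hga, ← hgb, hC4ut, hC4w]
  -- Step 2: FTC gives zero integral of g'
  have hint : IntervalIntegrable g' volume a b :=
    (hg'cont.mono (by rw [Set.uIcc_of_le hab.le])).intervalIntegrable
  have hFTC : ∫ x in a..b, g' x = g t₀ b i - g t₀ a i := by
    apply intervalIntegral.integral_eq_sub_of_hasDerivAt
    · intro x hx
      exact hg' x (by rwa [Set.uIcc_of_le hab.le] at hx)
    · exact hint
  have hzero : ∫ x in Set.Ioo a b, g' x = 0 := by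
    rw [hgab, sub_self] at hFTC
    rwa [intervalIntegral.integral_of_le hab.le,
      MeasureTheory.integral_Ioc_eq_integral_Ioo] at hFTC
  -- Step 3: g' vanishes on (a,b)
  have hg'zero : ∀ x ∈ Set.Ioo a b, g' x = 0 := by
    rcases hC5 with hpos | hneg
    · exact aux_zero_on_Ioo hab hg'cont hpos hzero
    · have hz' : ∫ x in Set.Ioo a b, (-g') x = 0 := by
        simp only [Pi.neg_apply]
        rw [MeasureTheory.integral_neg, hzero, neg_zero]
      have := aux_zero_on_Ioo hab hg'cont.neg (fun x hx => by
        simpa using hneg x hx) hz'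
      intro x hx
      have := this x hx
      simpa [neg_eq_zero] using this
  -- Step 4: u t₀ ≡ 0
  have hu0 : ∀ x : ℝ, u t₀ x = 0 := hC6 hg'zero
  have hu0' : u t₀ = fun _ => (0 : Fin m → ℝ) := funext hu0
  have ht₀' : t₀ ∈ Set.Ico (0:ℝ) T := ⟨ht₀.1.le, ht₀.2⟩
  have h0 : h 0 = 0 := (h_zero 0).mpr rfl
  -- Step 5: the conserved constant is 0
  obtain ⟨c, hc⟩ := h_cons
  have hjet0 : (fun x : ℝ => h (fun i : Fin (k+1) => iteratedDeriv i.1 (u t₀) x))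
      = fun _ => 0 := by
    funext x
    have : (fun i : Fin (k+1) => iteratedDeriv i.1 (u t₀) x) = 0 := by
      funext j
      rw [hu0', iteratedDeriv_zero_fun]
      rfl
    rw [this, h0]
  have hc0 : c = 0 := by
    have := hc t₀ ht₀'
    rw [hjet0] at this
    simpa using this.symm
  rw [hc0] at hc
  -- Step 6: conclude for every t
  intro t ht x
  set F : ℝ → ℝ := fun x => h (fun i : Fin (k+1) => iteratedDeriv i.1 (u t) x) with hF
  have hFcont : Continuous F := by
    apply h_cont.comp
    apply continuous_pi
    intro j
    exact ((hreg t ht).continuous_iteratedDeriv j.1 (by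
      exact_mod_cast Nat.lt_succ_iff.mp j.2))
  have hFint : Integrable F := h_int t ht
  have hFzero : ∫ x, F x = 0 := hc t ht
  have hFall : ∀ y, F y = 0 := by
    rcases h_sign with hpos | hneg
    · exact aux_zero_on_univ hFcont (fun y => hpos _) hFint hFzero
    · have := aux_zero_on_univ hFcont.neg (fun y => by simpa using hneg _)
        hFint.neg (by simp only [Pi.neg_apply]; rw [MeasureTheory.integral_neg, hFzero, neg_zero])
      intro y
      have := this y
      simpa [neg_eq_zero] using this
  have : (fun i : Fin (k+1) => iteratedDeriv i.1 (u t) x) = 0 := (h_zero _).mp (hFall x)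
  have := congrFun this ⟨0, Nat.succ_pos k⟩
  simpa [iteratedDeriv_zero] using this
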